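/- Any chain in T_n^B has at most n² + 1 elements: if C is a finite set of valid tuples that is totally ordered by the componentwise order, then |C| ≤ n² + 1. -/

import Mathlib

/-- Validity predicate for elements of the type B Tamari lattice `T_n^B`,
encoded as tuples `r : Fin n → Fin (n+1)` where the value `n` represents `∞`. -/
def ValidB (n : ℕ) (r : Fin n → Fin (n+1)) : Prop :=
  (∀ i j : Fin n, i < j → (r j : ℕ) < n → (j : ℕ) - (i : ℕ) ≤ (r j : ℕ) →
      (r i : ℕ) ≤ (r j : ℕ) - ((j : ℕ) - (i : ℕ))) ∧
  (∀ i : Fin n, ∀ _h1 : (r i : ℕ) < n, ∀ h2 : (i : ℕ) + 1 ≤ (r i : ℕ),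
      (r ⟨n + (i : ℕ) - (r i : ℕ), by have := i.isLt; omega⟩ : ℕ) = n)

theorem chain_card_le (n : ℕ) (C : Finset (Fin n → Fin (n+1)))
    (hval : ∀ r ∈ C, ValidB n r)
    (hchain : ∀ r ∈ C, ∀ s ∈ C, r ≤ s ∨ s ≤ r) :
    C.card ≤ n ^ 2 + 1 := by
  classical
  set f : (Fin n → Fin (n+1)) → ℕ := fun r => ∑ i, (r i : ℕ) with hf
  have hinj : Set.InjOn f C := by
    intro r hr s hs hfs
    have key : ∀ r s : Fin n → Fin (n+1), r ≤ s → f r = f s → r = s := by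
      intro r s hle heq
      funext i
      have h := (Finset.sum_eq_sum_iff_of_le (f := fun j => (r j : ℕ)) (g := fun j => (s j : ℕ)) (fun j _ => (hle j : (r j : ℕ) ≤ s j))).mp
        heq i (Finset.mem_univ i)
      exact Fin.ext h
    rcases hchain r hr s hs with h | h
    · exact key r s h hfs
    · exact (key s r h hfs.symm).symm
  have hcard : C.card = (C.image f).card :=
    (Finset.card_image_of_injOn hinj).symm
  have hsub : C.image f ⊆ Finset.range (n ^ 2 + 1) := by
    intro m hm
    rw [Finset.mem_image] at hm
    obtain ⟨r, _, rfl⟩ := hm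
    rw [Finset.mem_range]
    have : f r ≤ ∑ _i : Fin n, n :=
      Finset.sum_le_sum fun i _ => Nat.lt_succ_iff.mp (r i).isLt
    simp only [Finset.sum_const, Finset.card_univ, Fintype.card_fin, smul_eq_mul] at this
    nlinarith [this]
  calc C.card = (C.image f).card := hcard
    _ ≤ (Finset.range (n ^ 2 + 1)).card := Finset.card_le_card hsub
    _ = n ^ 2 + 1 := Finset.card_range _
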